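/- Let (M_j,Q_j)_{j≥1} be an i.i.d. sequence of random vectors with M_j>0 almost surely, and suppose there exists p∈(0,1] such that ρ := E[M_1^p] < 1 and E[|Q_1|^p] < ∞. Then: (1) Σ_{n≥1} |Q_n| ∏_{j=1}^{n−1} M_j < ∞ almost surely, so that Y_∞ := Σ_{n≥1} Q_n ∏_{j=1}^{n−1} M_j converges almost surely to a finite random variable; (2) writing Y_{1,∞} := Σ_{n≥2} Q_n ∏_{j=2}^{n−1} M_j, one has Y_∞ = Q_1 + M_1·Y_{1,∞}, where Y_{1,∞} is independent of (M_1,Q_1) and has the same law as Y_∞; in particular Y_∞ solves the distributional equation Y_∞ =d Q_1 + M_1·Y_∞ with Y_∞ independent of (M_1,Q_1). -/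

import Mathlib

open MeasureTheory ProbabilityTheory Real Filter

/-- A countable sum of measurable real functions is measurable (w.r.t. any σ-algebra). -/
lemma measurable_tsum_real {α : Type*} {mα : MeasurableSpace α} {f : ℕ → α → ℝ}
    (hf : ∀ n, Measurable (f n)) : Measurable (fun x => ∑' n, f n x) := by
  set S : Set α := {x | Summable fun n => f n x} with hSdef
  have hSmeas : MeasurableSet S := by
    have : S = ⋃ C : ℕ, ⋂ n : ℕ, {x | ∑ i ∈ Finset.range n, |f i x| ≤ (C : ℝ)} := by
      ext x
      simp only [hSdef, Set.mem_iUnion, Set.mem_iInter, Set.mem_setOf_eq]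
      constructor
      · intro h
        have habs : Summable fun n => |f n x| := summable_abs_iff.mpr h
        obtain ⟨C, hC⟩ := exists_nat_ge (∑' n, |f n x|)
        exact ⟨C, fun n => le_trans (Summable.sum_le_tsum _ (fun i _ => abs_nonneg _) habs) hC⟩
      · rintro ⟨C, hC⟩
        exact summable_abs_iff.mp (summable_of_sum_range_le (fun n => abs_nonneg _) hC)
    rw [this]
    exact MeasurableSet.iUnion fun C => MeasurableSet.iInter fun n =>
      measurableSet_le (Finset.measurable_sum _ fun i _ => (hf i).abs) measurable_const
  have key : ∀ x, Tendsto (fun n => S.indicator (fun y => ∑ i ∈ Finset.range n, f i y) x)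
      atTop (nhds (∑' n, f n x)) := by
    intro x
    by_cases hx : x ∈ S
    · simp only [Set.indicator_of_mem hx]
      exact (hx : Summable _).hasSum.tendsto_sum_nat
    · simp only [Set.indicator_of_notMem hx]
      rw [tsum_eq_zero_of_not_summable hx]
      exact tendsto_const_nhds
  exact measurable_of_tendsto_metrizable
    (fun n => ((Finset.measurable_sum _ fun i _ => hf i).indicator hSmeas))
    (tendsto_pi_nhds.mpr key)

/-- The joint law of finitely many coordinates of an i.i.d. sequence (reindexed injectively)
is the product of the common law. -/
lemma map_tuple_eq_pi {Ω : Type*} [MeasurableSpace Ω] {μ : Measure Ω} [IsProbabilityMeasure μ]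
    {β : Type*} [MeasurableSpace β] {X : ℕ → Ω → β}
    (hX : ∀ n, Measurable (X n))
    (hindep : iIndepFun X μ)
    (hident : ∀ n, IdentDistrib (X n) (X 0) μ μ)
    (I : Finset ℕ) (φ : ℕ → ℕ) (hφ : Function.Injective φ) :
    μ.map (fun ω (i : I) => X (φ i) ω) = Measure.pi (fun _ : I => μ.map (X 0)) := by
  symm
  apply Measure.pi_eq
  intro s hs
  set sets : ℕ → Set β := fun j => ⋂ (i : I) (_ : φ i = j), s i with hsetsdef
  have hsets_meas : ∀ j, MeasurableSet (sets j) := fun j =>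
    MeasurableSet.iInter fun i => MeasurableSet.iInter fun _ => hs i
  have htuple : Measurable (fun ω (i : I) => X (φ i) ω) :=
    measurable_pi_lambda _ fun i => hX _
  rw [Measure.map_apply htuple (MeasurableSet.univ_pi hs)]
  have hpre : (fun ω (i : I) => X (φ i) ω) ⁻¹' (Set.univ.pi s)
      = ⋂ j ∈ I.image φ, X j ⁻¹' sets j := by
    ext ω
    simp only [Set.mem_preimage, Set.mem_univ_pi, Set.mem_iInter, Finset.mem_image,
      forall_exists_index, and_imp]
    constructor
    · rintro h j i hi rfl
      refine Set.mem_iInter.2 fun i' => Set.mem_iInter.2 fun hi' => ?_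
      have : i' = (⟨i, hi⟩ : I) := Subtype.ext (hφ hi')
      subst this
      exact h _
    · intro h i
      have := h (φ i) i i.2 rfl
      rw [hsetsdef] at this
      simp only [Set.mem_iInter] at this
      exact this i rfl
  rw [hpre, hindep.measure_inter_preimage_eq_mul (I.image φ) (fun j _ => hsets_meas j)]
  have himg : I.image φ = I.attach.image (fun i : {x // x ∈ I} => φ i.val) := by
    ext a; simp
  rw [himg, Finset.prod_image (fun a _ b _ hab => Subtype.ext (hφ hab))]
  rw [Finset.univ_eq_attach]
  refine Finset.prod_congr rfl fun i _ => ?_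
  have hsi : sets (φ ↑i) = s i := by
    ext x
    simp only [hsetsdef, Set.mem_iInter]
    constructor
    · intro h; exact h i rfl
    · intro hx i' hi'
      have : i' = i := Subtype.ext (hφ hi')
      subst this; exact hx
  rw [hsi, Measure.map_apply (hX 0) (hs i)]
  exact (hident (φ ↑i)).measure_mem_eq (hs i)

/-- The law of an i.i.d. sequence is invariant under the one-step shift. -/
lemma map_seq_eq_of_shift {Ω : Type*} [MeasurableSpace Ω] {μ : Measure Ω} [IsProbabilityMeasure μ]
    {β : Type*} [MeasurableSpace β] {X : ℕ → Ω → β}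
    (hX : ∀ n, Measurable (X n))
    (hindep : iIndepFun X μ)
    (hident : ∀ n, IdentDistrib (X n) (X 0) μ μ) :
    μ.map (fun ω (n : ℕ) => X (n + 1) ω) = μ.map (fun ω (n : ℕ) => X n ω) := by
  have hseq' : Measurable (fun ω (n : ℕ) => X (n + 1) ω) := measurable_pi_lambda _ fun n => hX _
  have hseq : Measurable (fun ω (n : ℕ) => X n ω) := measurable_pi_lambda _ fun n => hX _
  haveI := Measure.isProbabilityMeasure_map (μ := μ) hseq'.aemeasurable
  haveI := Measure.isProbabilityMeasure_map (μ := μ) hseq.aemeasurable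
  refine ext_of_generate_finite _ generateFrom_measurableCylinders.symm
    isPiSystem_measurableCylinders (fun t ht => ?_) (by simp)
  obtain ⟨I, S, hSm, rfl⟩ := (mem_measurableCylinders t).mp ht
  rw [Measure.map_apply hseq' hSm.cylinder, Measure.map_apply hseq hSm.cylinder]
  have h1 : (fun ω (n : ℕ) => X (n + 1) ω) ⁻¹' cylinder I S
      = (fun ω (i : I) => X (↑i + 1) ω) ⁻¹' S := by
    ext ω; exact Iff.rfl
  have h2 : (fun ω (n : ℕ) => X n ω) ⁻¹' cylinder I S
      = (fun ω (i : I) => X (↑i) ω) ⁻¹' S := by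
    ext ω; exact Iff.rfl
  have e1 : μ.map (fun ω (i : I) => X (↑i + 1) ω) = Measure.pi (fun _ : I => μ.map (X 0)) :=
    map_tuple_eq_pi hX hindep hident I (fun n => n + 1) (fun a b h => by simpa using h)
  have e2 : μ.map (fun ω (i : I) => X (↑i) ω) = Measure.pi (fun _ : I => μ.map (X 0)) :=
    map_tuple_eq_pi hX hindep hident I (fun n => n) (fun a b h => h)
  rw [h1, h2, ← Measure.map_apply (measurable_pi_lambda _ fun i => hX _) hSm,
    ← Measure.map_apply (measurable_pi_lambda _ fun i => hX _) hSm, e1, e2]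

theorem perpetuity_series_solves_distributional_equation
    {Ω : Type*} [MeasurableSpace Ω] (μ : Measure Ω) [IsProbabilityMeasure μ]
    (M Q : ℕ → Ω → ℝ) (hMmeas : ∀ n, Measurable (M n)) (hQmeas : ∀ n, Measurable (Q n))
    (hindep : iIndepFun (fun n ω => (M n ω, Q n ω)) μ)
    (hident : ∀ n, IdentDistrib (fun ω => (M n ω, Q n ω)) (fun ω => (M 0 ω, Q 0 ω)) μ μ)
    (hMpos : ∀ᵐ ω ∂μ, ∀ n, 0 < M n ω)
    (p : ℝ) (hp0 : 0 < p) (hp1 : p ≤ 1)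
    (hMint : Integrable (fun ω => M 0 ω ^ p) μ)
    (hρ : ∫ ω, M 0 ω ^ p ∂μ < 1)
    (hQint : Integrable (fun ω => |Q 0 ω| ^ p) μ)
    (Yinf Y1inf : Ω → ℝ)
    (hYinf : ∀ ω, Yinf ω = ∑' n : ℕ, Q n ω * ∏ j ∈ Finset.range n, M j ω)
    (hY1inf : ∀ ω, Y1inf ω = ∑' n : ℕ, Q (n + 1) ω * ∏ j ∈ Finset.Ico 1 (n + 1), M j ω) :
    (∀ᵐ ω ∂μ, Summable (fun n : ℕ => |Q n ω| * ∏ j ∈ Finset.range n, M j ω)) ∧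
    (∀ᵐ ω ∂μ, Yinf ω = Q 0 ω + M 0 ω * Y1inf ω) ∧
    IndepFun Y1inf (fun ω => (M 0 ω, Q 0 ω)) μ ∧
    Measure.map Y1inf μ = Measure.map Yinf μ := by
  -- Notation
  set X : ℕ → Ω → ℝ × ℝ := fun n ω => (M n ω, Q n ω) with hXdef
  have hXmeas : ∀ n, Measurable (X n) := fun n => (hMmeas n).prodMk (hQmeas n)
  have hXindep : iIndepFun X μ := hindep
  have hXident : ∀ n, IdentDistrib (X n) (X 0) μ μ := hident
  set ρ : ℝ := ∫ ω, M 0 ω ^ p ∂μ with hρdef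
  set c : ℝ := ∫ ω, |Q 0 ω| ^ p ∂μ with hcdef
  -- the powered factors
  set W : ℕ → Ω → ℝ := fun i ω => M i ω ^ p with hWdef
  have hWmeas : ∀ i, Measurable (W i) := fun i => by
    have := hMmeas i; fun_prop
  have hWindep : iIndepFun W μ :=
    hindep.comp (fun _ x => x.1 ^ p) (fun _ => by fun_prop)
  have hWident : ∀ i, IdentDistrib (W i) (W 0) μ μ :=
    fun i => (hident i).comp (u := fun x : ℝ × ℝ => x.1 ^ p) (by fun_prop)
  have hWint : ∀ i, Integrable (W i) μ := fun i => ((hWident i).integrable_iff).mpr hMint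
  have hWintegral : ∀ i, ∫ ω, W i ω ∂μ = ρ := fun i => (hWident i).integral_eq
  have hρnn : 0 ≤ ρ := by
    apply integral_nonneg_of_ae
    filter_upwards [hMpos] with ω h
    exact Real.rpow_nonneg (h 0).le p
  -- products of the powered factors
  have hprod : ∀ n, Integrable (∏ j ∈ Finset.range n, W j) μ ∧
      ∫ ω, (∏ j ∈ Finset.range n, W j) ω ∂μ = ρ ^ n := by
    intro n
    induction n with
    | zero =>
      constructor
      · simp only [Finset.prod_range_zero]; exact integrable_const (1 : ℝ)
      · simp
    | succ n ih =>
      have hIF : IndepFun (∏ j ∈ Finset.range n, W j) (W n) μ :=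
        hWindep.indepFun_prod_range_succ hWmeas n
      rw [Finset.prod_range_succ]
      refine ⟨hIF.integrable_mul ih.1 (hWint n), ?_⟩
      rw [show (∫ ω, ((∏ j ∈ Finset.range n, W j) * W n) ω ∂μ)
          = ∫ ω, ((∏ j ∈ Finset.range n, W j) * W n) ω ∂μ from rfl,
        hIF.integral_mul_eq_mul_integral ih.1.aestronglyMeasurable (hWint n).aestronglyMeasurable, ih.2, hWintegral n, pow_succ]
  -- the powered |Q| factors
  set VQ : ℕ → Ω → ℝ := fun n ω => |Q n ω| ^ p with hVQdef
  have hVQmeas : ∀ n, Measurable (VQ n) := fun n => by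
    have := hQmeas n; fun_prop
  have hVQident : ∀ n, IdentDistrib (VQ n) (VQ 0) μ μ :=
    fun n => (hident n).comp (u := fun x : ℝ × ℝ => |x.2| ^ p) (by fun_prop)
  have hVQint : ∀ n, Integrable (VQ n) μ := fun n => ((hVQident n).integrable_iff).mpr hQint
  have hVQintegral : ∀ n, ∫ ω, VQ n ω ∂μ = c := fun n => (hVQident n).integral_eq
  have hcnn : 0 ≤ c := by
    apply integral_nonneg
    intro ω
    exact Real.rpow_nonneg (abs_nonneg _) p
  -- independence of VQ n from the product of W j, j < n
  have hPVindep : ∀ n, IndepFun (∏ j ∈ Finset.range n, W j) (VQ n) μ := by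
    intro n
    set g : ℕ → ℝ × ℝ → ℝ := fun i => if i = n then (fun x => |x.2| ^ p) else (fun x => x.1 ^ p)
      with hgdef
    have hgmeas : ∀ i, Measurable (g i) := by
      intro i
      by_cases h : i = n
      · simp only [hgdef, if_pos h]; fun_prop
      · simp only [hgdef, if_neg h]; fun_prop
    have hZindep := hindep.comp g hgmeas
    have hZP := hZindep.indepFun_finsetProd_of_notMem
      (fun i => (hgmeas i).comp (hXmeas i)) (Finset.notMem_range_self (n := n))
    have e1 : (∏ j ∈ Finset.range n, g j ∘ X j) = ∏ j ∈ Finset.range n, W j := by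
      apply Finset.prod_congr rfl
      intro j hj
      funext ω
      simp only [hgdef, Function.comp_apply, if_neg (Finset.mem_range.mp hj).ne]; rfl
    have e2 : (g n ∘ X n) = VQ n := by
      funext ω
      simp only [hgdef, Function.comp_apply, if_pos rfl]; rfl
    rwa [e1, e2] at hZP
  -- the summands
  set V : ℕ → Ω → ℝ := fun n => VQ n * ∏ j ∈ Finset.range n, W j with hVdef
  have hPmeas : ∀ n, Measurable (∏ j ∈ Finset.range n, W j) := by
    intro n
    rw [show (∏ j ∈ Finset.range n, W j) = fun ω => ∏ j ∈ Finset.range n, W j ω from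
      funext fun ω => Finset.prod_apply ω (Finset.range n) W]
    exact Finset.measurable_prod _ fun j _ => hWmeas j
  have hVmeas : ∀ n, Measurable (V n) := fun n =>
    (hVQmeas n).mul (hPmeas n)
  have hVint : ∀ n, Integrable (V n) μ := fun n =>
    ((hPVindep n).symm).integrable_mul (hVQint n) (hprod n).1
  have hVintegral : ∀ n, ∫ ω, V n ω ∂μ = c * ρ ^ n := by
    intro n
    rw [hVdef]
    rw [((hPVindep n).symm).integral_mul_eq_mul_integral (hVQint n).aestronglyMeasurable (hprod n).1.aestronglyMeasurable]
    rw [hVQintegral n, (hprod n).2]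
  have hVnn : ∀ n, ∀ᵐ ω ∂μ, 0 ≤ V n ω := by
    intro n
    filter_upwards [hMpos] with ω h
    refine mul_nonneg (Real.rpow_nonneg (abs_nonneg _) p) ?_
    rw [Finset.prod_apply]
    exact Finset.prod_nonneg fun j _ => Real.rpow_nonneg (h j).le p
  -- the lintegral bound
  have hlint : ∫⁻ ω, ∑' n, ENNReal.ofReal (V n ω) ∂μ = ∑' n, ENNReal.ofReal (c * ρ ^ n) := by
    rw [lintegral_tsum (fun n => ((hVmeas n).ennreal_ofReal).aemeasurable)]
    exact tsum_congr fun n => by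
      rw [← ofReal_integral_eq_lintegral_ofReal (hVint n) (hVnn n), hVintegral n]
  have hfin : ∑' n, ENNReal.ofReal (c * ρ ^ n) ≠ ⊤ := by
    rw [← ENNReal.ofReal_tsum_of_nonneg (fun n => mul_nonneg hcnn (pow_nonneg hρnn n))
      ((summable_geometric_of_lt_one hρnn hρ).mul_left c)]
    exact ENNReal.ofReal_ne_top
  have haefin : ∀ᵐ ω ∂μ, ∑' n, ENNReal.ofReal (V n ω) < ⊤ :=
    ae_lt_top (Measurable.ennreal_tsum fun n => (hVmeas n).ennreal_ofReal)
      (by rw [hlint]; exact hfin)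
  -- Part 1: a.s. summability
  have hsummA : ∀ᵐ ω ∂μ, Summable (fun n : ℕ => |Q n ω| * ∏ j ∈ Finset.range n, M j ω) := by
    filter_upwards [haefin, hMpos] with ω hωfin hωpos
    set T : ℕ → ℝ := fun n => |Q n ω| * ∏ j ∈ Finset.range n, M j ω with hTdef
    have hTnn : ∀ n, 0 ≤ T n :=
      fun n => mul_nonneg (abs_nonneg _) (Finset.prod_nonneg fun j _ => (hωpos j).le)
    have hVT : ∀ n, V n ω = T n ^ p := by
      intro n
      rw [hTdef]
      simp only
      rw [Real.mul_rpow (abs_nonneg _) (Finset.prod_nonneg fun j _ => (hωpos j).le),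
        ← Real.finset_prod_rpow _ _ (fun j _ => (hωpos j).le)]
      simp [hVdef, hVQdef, hWdef, Finset.prod_apply]
    have hsp : Summable (fun n => T n ^ p) := by
      have h1 := ENNReal.summable_toReal hωfin.ne
      have h2 : ∀ n, (ENNReal.ofReal (V n ω)).toReal = T n ^ p := by
        intro n
        rw [ENNReal.toReal_ofReal (by rw [hVT n]; exact Real.rpow_nonneg (hTnn n) p), hVT n]
      simpa [h2] using h1
    have h0 : Tendsto (fun n => T n ^ p) atTop (nhds 0) := hsp.tendsto_atTop_zero
    have hlt1 : ∀ᶠ n in atTop, T n < 1 := by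
      filter_upwards [h0.eventually (gt_mem_nhds one_pos)] with n hn
      by_contra hcon
      push_neg at hcon
      exact absurd hn (not_lt.2 (Real.one_le_rpow hcon hp0.le))
    obtain ⟨N, hN⟩ := eventually_atTop.mp hlt1
    rw [← summable_nat_add_iff N]
    refine Summable.of_nonneg_of_le (fun n => hTnn _) (fun n => ?_)
      ((summable_nat_add_iff N).mpr hsp)
    rcases eq_or_lt_of_le (hTnn (n + N)) with h | h
    · rw [← h, Real.zero_rpow hp0.ne']
    · calc T (n + N) = T (n + N) ^ (1 : ℝ) := (Real.rpow_one _).symm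
        _ ≤ T (n + N) ^ p := Real.rpow_le_rpow_of_exponent_ge h (hN _ (Nat.le_add_left N n)).le hp1
  refine ⟨hsummA, ?_, ?_, ?_⟩
  -- Part 2: the recursive identity
  · filter_upwards [hsummA, hMpos] with ω hsum hpos
    have habs : Summable (fun n : ℕ => Q n ω * ∏ j ∈ Finset.range n, M j ω) := by
      apply Summable.of_abs
      refine hsum.congr fun n => ?_
      rw [abs_mul, abs_of_nonneg (Finset.prod_nonneg fun j _ => (hpos j).le)]
    rw [hYinf ω, hY1inf ω, Summable.tsum_eq_zero_add habs]
    simp only [Finset.range_zero, Finset.prod_empty, mul_one]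
    congr 1
    rw [← tsum_mul_left]
    apply tsum_congr
    intro n
    rw [Finset.prod_range_succ', Finset.prod_Ico_eq_prod_range]
    have hidx : ∏ i ∈ Finset.range (n + 1 - 1), M (1 + i) ω = ∏ i ∈ Finset.range n, M (i + 1) ω :=
      Finset.prod_congr (by norm_num) fun i _ => by rw [add_comm]
    rw [hidx]
    ring
  -- Part 3: independence
  · have hcomap_le : ∀ i, MeasurableSpace.comap (X i) inferInstance ≤ ‹MeasurableSpace Ω› :=
      fun i => (hXmeas i).comap_le
    have hIndepSig : Indep (⨆ i ∈ ({0}ᶜ : Set ℕ), MeasurableSpace.comap (X i) inferInstance)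
        (⨆ i ∈ ({0} : Set ℕ), MeasurableSpace.comap (X i) inferInstance) μ :=
      indep_iSup_of_disjoint hcomap_le hXindep disjoint_compl_left
    have hXm' : ∀ i, i ≠ 0 → Measurable[⨆ i ∈ ({0}ᶜ : Set ℕ),
        MeasurableSpace.comap (X i) inferInstance] (X i) := by
      intro i hi
      refine Measurable.mono (measurable_iff_comap_le.mpr le_rfl) ?_ le_rfl
      exact le_iSup₂ (f := fun (i : ℕ) (_ : i ∈ ({0}ᶜ : Set ℕ)) =>
        MeasurableSpace.comap (X i) inferInstance) i hi
    have hY1meas' : Measurable[⨆ i ∈ ({0}ᶜ : Set ℕ),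
        MeasurableSpace.comap (X i) inferInstance] Y1inf := by
      have : Y1inf = fun ω => ∑' n : ℕ, Q (n + 1) ω * ∏ j ∈ Finset.Ico 1 (n + 1), M j ω :=
        funext hY1inf
      rw [this]
      apply measurable_tsum_real
      intro n
      apply Measurable.mul
      · exact measurable_snd.comp (hXm' (n + 1) (Nat.succ_ne_zero n))
      · apply Finset.measurable_prod
        intro j hj
        have hj0 : j ≠ 0 := by
          have := (Finset.mem_Ico.mp hj).1; omega
        exact measurable_fst.comp (hXm' j hj0)
    have h2 : MeasurableSpace.comap (X 0) inferInstance
        ≤ ⨆ i ∈ ({0} : Set ℕ), MeasurableSpace.comap (X i) inferInstance :=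
      le_iSup₂ (f := fun (i : ℕ) (_ : i ∈ ({0} : Set ℕ)) =>
        MeasurableSpace.comap (X i) inferInstance) 0 rfl
    exact indep_of_indep_of_le_right (indep_of_indep_of_le_left hIndepSig hY1meas'.comap_le) h2
  -- Part 4: equality of laws
  · have hseq' : Measurable (fun ω (n : ℕ) => X (n + 1) ω) :=
      measurable_pi_lambda _ fun n => hXmeas _
    have hseq : Measurable (fun ω (n : ℕ) => X n ω) :=
      measurable_pi_lambda _ fun n => hXmeas _
    set G : (ℕ → ℝ × ℝ) → ℝ := fun x => ∑' n, (x n).2 * ∏ j ∈ Finset.range n, (x j).1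
      with hGdef
    have hGmeas : Measurable G := by
      apply measurable_tsum_real
      intro n
      fun_prop
    have hYG : Yinf = G ∘ (fun ω (n : ℕ) => X n ω) := funext fun ω => by
      rw [hYinf ω]; rfl
    have hY1G : Y1inf = G ∘ (fun ω (n : ℕ) => X (n + 1) ω) := by
      funext ω
      rw [hY1inf ω]
      simp only [Function.comp_apply, hGdef]
      apply tsum_congr
      intro n
      rw [Finset.prod_Ico_eq_prod_range]
      congr 1
      apply Finset.prod_congr (by norm_num)
      intro i _
      simp [hXdef, add_comm]
    rw [hYG, hY1G, ← Measure.map_map hGmeas hseq', ← Measure.map_map hGmeas hseq,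
      map_seq_eq_of_shift hXmeas hXindep hXident]
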